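/- arXiv:1309.5595 — 6 statements merged into one kernel-verified Lean document; each statement's English description precedes it below -/
import Mathlib

section
/- Let p ∈ [2,∞) and let (H, ⟨·,·⟩, ‖·‖) be a real Hilbert space. Then the function F : H → ℝ given by F(x) = ‖x‖^p is twice continuously Fréchet differentiable and for all x, v, w ∈ H it holds that F'(x)(v) = p‖x‖^{p−2}⟨x, v⟩ and F''(x)(v, w) = p‖x‖^{p−2}⟨v, w⟩ + p(p−2)‖x‖^{p−4}⟨x, v⟩⟨x, w⟩, where at x = 0 the right-hand sides are interpreted with the conventions 0⁰ = 1 and 0·∞ = 0 (so that for p > 2 both F'(0) and F''(0) vanish, and for p = 2 one has F'(0) = 0 and F''(0)(v,w) = 2⟨v,w⟩). -/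
open scoped RealInnerProductSpace
open Asymptotics Real Topology

set_option maxHeartbeats 1000000
set_option synthInstance.maxHeartbeats 1000000

section Aux

variable {H : Type*} [NormedAddCommGroup H] [InnerProductSpace ℝ H]

/-- The bilinear inner product as an `ℝ`-linear CLM. -/
noncomputable def innerSL' (H : Type*) [NormedAddCommGroup H] [InnerProductSpace ℝ H] :
    H →L[ℝ] (H →L[ℝ] ℝ) := innerSL ℝ

@[simp] lemma innerSL'_apply (x v : H) : innerSL' H x v = ⟪x, v⟫ := rfl

lemma innerSL'_eq (x : H) : innerSL' H x = innerSL ℝ x := rfl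

/-- Derivative of `‖·‖^q` away from zero, for any real `q`. -/
lemma hasFDerivAt_norm_rpow_ne {x : H} (hx : x ≠ 0) (q : ℝ) :
    HasFDerivAt (fun y : H => ‖y‖ ^ q) ((q * ‖x‖ ^ (q - 2)) • innerSL ℝ x) x := by
  apply HasStrictFDerivAt.hasFDerivAt
  convert (hasStrictFDerivAt_norm_sq x).rpow_const (p := q / 2) (by simp [hx]) using 0
  simp_rw [← Real.rpow_natCast_mul (norm_nonneg _), ← Nat.cast_smul_eq_nsmul ℝ, smul_smul]
  ring_nf

/-- The first derivative map. -/
noncomputable def Phi (p : ℝ) (x : H) : H →L[ℝ] ℝ := (p * ‖x‖ ^ (p - 2)) • innerSL ℝ x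

/-- The second derivative map. -/
noncomputable def Psi (p : ℝ) (x : H) : H →L[ℝ] (H →L[ℝ] ℝ) :=
  (p * ‖x‖ ^ (p - 2)) • innerSL' H
    + ((p * (p - 2) * ‖x‖ ^ (p - 4)) • innerSL ℝ x).smulRight (innerSL ℝ x)

lemma hasFDerivAt_Phi (p : ℝ) (hp : 2 ≤ p) (x : H) :
    HasFDerivAt (Phi p (H := H)) (Psi p x) x := by
  by_cases hx : x = 0
  · subst hx
    rcases eq_or_lt_of_le hp with hp2 | hp2
    · -- p = 2 : `Phi` is linear
      subst hp2
      have hP : (Phi 2 (H := H)) = fun y => (2 : ℝ) • innerSL' H y := by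
        funext y; simp [Phi, innerSL'_eq]
      rw [hP]
      have h := ((innerSL' H).hasFDerivAt (x := (0 : H))).const_smul (2 : ℝ)
      have hPsi : Psi 2 (0 : H) = (2 : ℝ) • innerSL' H := by
        ext w v
        simp [Psi, innerSL'_apply, Real.zero_rpow]
      rw [hPsi]
      exact h
    · -- p > 2 : derivative is 0 at 0
      have h2p : 0 < p - 2 := by linarith
      have hPsi0 : Psi p (0 : H) = 0 := by
        ext w v
        simp [Psi, Real.zero_rpow h2p.ne']
      have hPhi0 : Phi p (0 : H) = 0 := by simp [Phi]
      rw [hPsi0, hasFDerivAt_iff_isLittleO]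
      calc (fun y : H => Phi p y - Phi p 0 - (0 : H →L[ℝ] H →L[ℝ] ℝ) (y - 0))
          = (fun y : H => Phi p y) := by simp [hPhi0]
        _ =o[𝓝 0] (fun y : H => y - 0) := by
            rw [← isLittleO_norm_left, ← isLittleO_norm_right]
            have hnorm : (fun y : H => ‖Phi p y‖)
                = fun y : H => (p * ‖y‖ ^ (p - 2)) * ‖y‖ := by
              funext y
              rw [Phi, norm_smul (p * ‖y‖ ^ (p - 2)) (innerSL ℝ y),
                innerSL_apply_norm, Real.norm_eq_abs,
                abs_of_nonneg (mul_nonneg (by linarith)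
                  (Real.rpow_nonneg (norm_nonneg y) _))]
            rw [hnorm]
            have h1 : (fun y : H => p * ‖y‖ ^ (p - 2)) =o[𝓝 (0 : H)]
                (fun _ => (1 : ℝ)) := by
              refine (isLittleO_const_iff (by norm_num)).mpr ?_
              have hca : ContinuousAt (fun y : H => p * ‖y‖ ^ (p - 2)) 0 := by
                fun_prop (discharger := simp [h2p.le])
              simpa [Real.zero_rpow h2p.ne'] using hca.tendsto
            have h2 := h1.mul_isBigO (isBigO_refl (fun y : H => ‖y‖) (𝓝 0))
            simpa using h2
  · -- x ≠ 0 : product rule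
    have hc : HasFDerivAt (fun y : H => p * ‖y‖ ^ (p - 2))
        (p • (((p - 2) * ‖x‖ ^ (p - 2 - 2)) • innerSL ℝ x)) x :=
      (hasFDerivAt_norm_rpow_ne hx (p - 2)).const_mul p
    have hL : HasFDerivAt (fun y : H => innerSL ℝ y) (innerSL' H) x :=
      (innerSL' H).hasFDerivAt
    have h := hc.smul hL
    have hPsi : Psi p x = (p * ‖x‖ ^ (p - 2)) • innerSL' H + (p • ((p - 2) * ‖x‖ ^ (p - 2 - 2)) • innerSL ℝ x).smulRight (innerSL ℝ x) := by
      ext w v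
      rw [show p - 2 - 2 = p - 4 by ring]
      simp only [Psi, ContinuousLinearMap.add_apply, ContinuousLinearMap.smul_apply,
        ContinuousLinearMap.smulRight_apply, innerSL'_apply, innerSL_apply_apply, smul_eq_mul,
        smul_smul]
      ring
    rw [hPsi]
    exact h

lemma norm_Psi_le (p : ℝ) (hp : 2 < p) (x : H) :
    ‖Psi p x‖ ≤ (p + p * (p - 2)) * ‖x‖ ^ (p - 2) := by
  have hp0 : (0 : ℝ) < p := by linarith
  have hc1 : (0 : ℝ) ≤ p * ‖x‖ ^ (p - 2) :=
    mul_nonneg hp0.le (Real.rpow_nonneg (norm_nonneg x) _)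
  have hc2 : (0 : ℝ) ≤ p * (p - 2) * ‖x‖ ^ (p - 4) :=
    mul_nonneg (mul_nonneg hp0.le (by linarith)) (Real.rpow_nonneg (norm_nonneg x) _)
  have h1 : ‖(p * ‖x‖ ^ (p - 2)) • innerSL' H‖ ≤ p * ‖x‖ ^ (p - 2) := by
    calc ‖(p * ‖x‖ ^ (p - 2)) • innerSL' H‖
        ≤ ‖(p * ‖x‖ ^ (p - 2) : ℝ)‖ * ‖innerSL' H‖ :=
          ContinuousLinearMap.opNorm_smul_le _ _
      _ ≤ (p * ‖x‖ ^ (p - 2)) * 1 := by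
          rw [Real.norm_eq_abs, abs_of_nonneg hc1]
          exact mul_le_mul_of_nonneg_left (norm_innerSL_le ℝ) hc1
      _ = p * ‖x‖ ^ (p - 2) := by ring
  have h2 : ‖((p * (p - 2) * ‖x‖ ^ (p - 4)) • innerSL ℝ x).smulRight (innerSL ℝ x)‖
      ≤ p * (p - 2) * ‖x‖ ^ (p - 2) := by
    rw [ContinuousLinearMap.norm_smulRight_apply,
      norm_smul (p * (p - 2) * ‖x‖ ^ (p - 4)) (innerSL ℝ x), Real.norm_eq_abs,
      abs_of_nonneg hc2, innerSL_apply_norm]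
    by_cases hx : x = 0
    · simp [hx, Real.zero_rpow (by linarith : p - 2 ≠ 0)]
    · have hxp : (0 : ℝ) < ‖x‖ := norm_pos_iff.mpr hx
      have e1 : ‖x‖ ^ (p - 2) = ‖x‖ ^ (p - 4) * ‖x‖ ^ (2 : ℝ) := by
        rw [← Real.rpow_add hxp]; congr 1; ring
      have e2 : ‖x‖ ^ (p - 4) * ‖x‖ * ‖x‖ = ‖x‖ ^ (p - 2) := by
        rw [e1, Real.rpow_two]; ring
      calc p * (p - 2) * ‖x‖ ^ (p - 4) * ‖x‖ * ‖x‖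
          = p * (p - 2) * (‖x‖ ^ (p - 4) * ‖x‖ * ‖x‖) := by ring
        _ = p * (p - 2) * ‖x‖ ^ (p - 2) := by rw [e2]
        _ ≤ p * (p - 2) * ‖x‖ ^ (p - 2) := le_rfl
  rw [Psi]
  calc ‖(p * ‖x‖ ^ (p - 2)) • innerSL' H
        + ((p * (p - 2) * ‖x‖ ^ (p - 4)) • innerSL ℝ x).smulRight (innerSL ℝ x)‖
      ≤ ‖(p * ‖x‖ ^ (p - 2)) • innerSL' H‖
        + ‖((p * (p - 2) * ‖x‖ ^ (p - 4)) • innerSL ℝ x).smulRight (innerSL ℝ x)‖ :=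
      norm_add_le (E := H →L[ℝ] (H →L[ℝ] ℝ)) _ _
    _ ≤ p * ‖x‖ ^ (p - 2) + p * (p - 2) * ‖x‖ ^ (p - 2) := add_le_add h1 h2
    _ = (p + p * (p - 2)) * ‖x‖ ^ (p - 2) := by ring

lemma continuous_Psi (p : ℝ) (hp : 2 ≤ p) : Continuous (Psi p (H := H)) := by
  rcases eq_or_lt_of_le hp with hp2 | hp2
  · subst hp2
    have hP : (Psi 2 (H := H)) = fun _ => (2 : ℝ) • innerSL' H := by
      funext x; ext w v
      simp [Psi, innerSL'_apply]
    rw [hP]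
    exact continuous_const
  · have h2p : 0 < p - 2 := by linarith
    have hcont1 : Continuous (fun x : H => (p * ‖x‖ ^ (p - 2)) • innerSL' H) := by
      have : Continuous (fun x : H => p * ‖x‖ ^ (p - 2)) :=
        continuous_const.mul (continuous_norm.rpow_const fun x => Or.inr h2p.le)
      exact this.smul continuous_const
    have hcontOn2 : ContinuousOn
        (fun x : H => ((p * (p - 2) * ‖x‖ ^ (p - 4)) • innerSL ℝ x).smulRight (innerSL ℝ x))
        {x : H | x ≠ 0} := by
      have hc : ContinuousOn (fun x : H => p * (p - 2) * ‖x‖ ^ (p - 4)) {x : H | x ≠ 0} :=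
        continuousOn_const.mul (continuous_norm.continuousOn.rpow_const
          fun x hx => Or.inl (norm_ne_zero_iff.mpr hx))
      have hco : ContinuousOn (fun x : H => (p * (p - 2) * ‖x‖ ^ (p - 4)) • innerSL ℝ x)
          {x : H | x ≠ 0} := hc.smul (innerSL' H).continuous.continuousOn
      have hA : ContinuousOn (fun x : H => ContinuousLinearMap.smulRightL ℝ H (H →L[ℝ] ℝ)
          ((p * (p - 2) * ‖x‖ ^ (p - 4)) • innerSL ℝ x)) {x : H | x ≠ 0} :=
        (ContinuousLinearMap.smulRightL ℝ H (H →L[ℝ] ℝ)).continuous.comp_continuousOn hco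
      exact hA.clm_apply (innerSL' H).continuous.continuousOn
    rw [continuous_iff_continuousAt]
    intro x
    by_cases hx : x = 0
    · subst hx
      have hPsi0 : Psi p (0 : H) = 0 := by
        ext w v
        simp [Psi, Real.zero_rpow h2p.ne']
      have hb : Filter.Tendsto (fun x : H => (p + p * (p - 2)) * ‖x‖ ^ (p - 2)) (𝓝 0)
          (𝓝 0) := by
        have hca : ContinuousAt (fun x : H => (p + p * (p - 2)) * ‖x‖ ^ (p - 2)) 0 := by
          fun_prop (discharger := simp [h2p.le])
        simpa [Real.zero_rpow h2p.ne'] using hca.tendsto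
      have ht : Filter.Tendsto (Psi p (H := H)) (𝓝 0) (𝓝 0) :=
        squeeze_zero_norm (f := Psi p (H := H)) (norm_Psi_le p hp2) hb
      simpa [ContinuousAt, hPsi0] using ht
    · have : ContinuousAdd (H →L[ℝ] H →L[ℝ] ℝ) :=
        @IsTopologicalAddGroup.toContinuousAdd (H →L[ℝ] H →L[ℝ] ℝ) _ _
          ContinuousLinearMap.topologicalAddGroup
      exact hcont1.continuousAt.add
        (hcontOn2.continuousAt (compl_singleton_mem_nhds hx))

end Aux

/-- For `p ∈ [2,∞)` and a real Hilbert space `H`, the function `F(x) = ‖x‖^p`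
is twice continuously Fréchet differentiable with
`F'(x)(v) = p ‖x‖^(p-2) ⟨x,v⟩` and
`F''(x)(v,w) = p ‖x‖^(p-2) ⟨v,w⟩ + p (p-2) ‖x‖^(p-4) ⟨x,v⟩ ⟨x,w⟩`,
where the real powers at `x = 0` follow the conventions `0^0 = 1` and
`0^t = 0` for `t ≠ 0` of the real power function. -/
theorem norm_rpow_contDiff_two_and_derivs
    {H : Type*} [NormedAddCommGroup H] [InnerProductSpace ℝ H] [CompleteSpace H]
    (p : ℝ) (hp : 2 ≤ p) :
    ContDiff ℝ 2 (fun x : H => ‖x‖ ^ p) ∧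
    (∀ x v : H, fderiv ℝ (fun x : H => ‖x‖ ^ p) x v
        = p * ‖x‖ ^ (p - 2) * ⟪x, v⟫) ∧
    (∀ x v w : H,
        fderiv ℝ (fun y : H => fderiv ℝ (fun z : H => ‖z‖ ^ p) y v) x w
          = p * ‖x‖ ^ (p - 2) * ⟪v, w⟫
            + p * (p - 2) * ‖x‖ ^ (p - 4) * ⟪x, v⟫ * ⟪x, w⟫) := by
  have hp1 : (1 : ℝ) < p := by linarith
  have hfd : ∀ x : H, fderiv ℝ (fun x : H => ‖x‖ ^ p) x = Phi p x := fun x =>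
    (hasFDerivAt_norm_rpow x hp1).fderiv
  refine ⟨?_, ?_, ?_⟩
  · -- ContDiff 2
    rw [show (2 : WithTop ℕ∞) = 1 + 1 from rfl, contDiff_succ_iff_fderiv]
    refine ⟨fun x => (hasFDerivAt_norm_rpow x hp1).differentiableAt, by simp, ?_⟩
    have hF : fderiv ℝ (fun x : H => ‖x‖ ^ p) = Phi p := funext hfd
    rw [hF, contDiff_one_iff_fderiv]
    refine ⟨fun x => (hasFDerivAt_Phi p hp x).differentiableAt, ?_⟩
    have hG : fderiv ℝ (Phi p (H := H)) = Psi p := funext fun x => (hasFDerivAt_Phi p hp x).fderiv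
    rw [hG]
    exact continuous_Psi p hp
  · intro x v
    rw [hfd x]
    simp [Phi]
  · intro x v w
    have hfun : (fun y : H => fderiv ℝ (fun z : H => ‖z‖ ^ p) y v)
        = fun y : H => (ContinuousLinearMap.apply ℝ ℝ v) (Phi p y) := by
      funext y; rw [hfd y]; rfl
    rw [hfun]
    have h : HasFDerivAt (fun y : H => (ContinuousLinearMap.apply ℝ ℝ v) (Phi p y))
        ((ContinuousLinearMap.apply ℝ ℝ v).comp (Psi p x)) x :=
      (ContinuousLinearMap.apply ℝ ℝ v).hasFDerivAt.comp x (hasFDerivAt_Phi p hp x)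
    rw [h.fderiv]
    simp only [ContinuousLinearMap.coe_comp', Function.comp_apply,
      ContinuousLinearMap.apply_apply, Psi, ContinuousLinearMap.add_apply,
      ContinuousLinearMap.smul_apply, ContinuousLinearMap.smulRight_apply,
      innerSL'_apply, innerSL_apply_apply, smul_eq_mul]
    rw [real_inner_comm w v]
    ring
end

section
/- Let p ∈ [2,∞) and let (H, ⟨·,·⟩, ‖·‖) be a real Hilbert space. Then the function G : H × H → ℝ given by G(x, y) = ‖x − y‖^p is twice continuously Fréchet differentiable and for all x, y, v, w ∈ H it holds that (∂G/∂x)(x,y)(v) = −(∂G/∂y)(x,y)(v) = p‖x−y‖^{p−2}⟨x−y, v⟩ and (∂²G/∂x²)(x,y)(v,w) = (∂²G/∂y²)(x,y)(v,w) = −((∂/∂y)(∂/∂x)G)(x,y)(v,w) = p‖x−y‖^{p−2}⟨v, w⟩ + p(p−2)‖x−y‖^{p−4}⟨x−y, v⟩⟨x−y, w⟩, where at x = y the right-hand sides are interpreted with the conventions 0⁰ = 1 and 0·∞ = 0. -/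
open Real Asymptotics
open scoped RealInnerProductSpace Topology

set_option synthInstance.maxHeartbeats 1000000
set_option maxHeartbeats 1000000

section Aux

variable {E : Type*} [NormedAddCommGroup E] [InnerProductSpace ℝ E]

/-- The inner product as a continuous linear map (real case). -/
noncomputable def innerCLM (E : Type*) [NormedAddCommGroup E] [InnerProductSpace ℝ E] :
    E →L[ℝ] E →L[ℝ] ℝ := innerSL ℝ

/-- The first derivative of `z ↦ ‖z‖ ^ p`. -/
noncomputable def gD1 (p : ℝ) (z : E) : E →L[ℝ] ℝ := (p * ‖z‖ ^ (p - 2)) • innerSL ℝ z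

/-- The second derivative of `z ↦ ‖z‖ ^ p`. -/
noncomputable def gD2 (p : ℝ) (z : E) : E →L[ℝ] E →L[ℝ] ℝ :=
  (p * ‖z‖ ^ (p - 2)) • innerCLM E
  + (p * (p - 2) * ‖z‖ ^ (p - 4)) • (innerSL ℝ z).smulRight (innerSL ℝ z)

theorem gD1_apply (p : ℝ) (z v : E) : gD1 p z v = p * ‖z‖ ^ (p - 2) * ⟪z, v⟫ := by
  simp [gD1]

theorem gD2_apply (p : ℝ) (z w v : E) :
    gD2 p z w v = p * ‖z‖ ^ (p - 2) * ⟪w, v⟫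
      + p * (p - 2) * ‖z‖ ^ (p - 4) * ⟪z, w⟫ * ⟪z, v⟫ := by
  simp [gD2, innerCLM]; rw [innerSL_apply_apply]; ring

theorem gD2_zero (p : ℝ) (hp2 : p ≠ 2) : gD2 p (0 : E) = 0 := by
  rw [gD2]
  ext w v
  simp [Real.zero_rpow (sub_ne_zero.mpr hp2)]

theorem hasFDerivAt_norm_rpow_ne_zero {z : E} (hz : z ≠ 0) (q : ℝ) :
    HasFDerivAt (fun z : E => ‖z‖ ^ q) ((q * ‖z‖ ^ (q - 2)) • innerSL ℝ z) z := by
  have h := ((hasStrictFDerivAt_norm_sq z).rpow_const (p := q / 2)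
    (Or.inl (by simp [hz]))).hasFDerivAt
  have e1 : (fun x : E => (‖x‖ ^ 2) ^ (q / 2)) = fun x : E => ‖x‖ ^ q := by
    funext w
    rw [← Real.rpow_natCast (‖w‖) 2, ← Real.rpow_mul (norm_nonneg _)]
    congr 1; ring
  have e2 : (q / 2 * (‖z‖ ^ 2) ^ (q / 2 - 1)) • 2 • innerSL ℝ z
      = (q * ‖z‖ ^ (q - 2)) • innerSL ℝ z := by
    rw [← Nat.cast_smul_eq_nsmul ℝ, smul_smul, ← Real.rpow_natCast (‖z‖) 2,
      ← Real.rpow_mul (norm_nonneg _)]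
    congr 1
    push_cast
    rw [show (2 : ℝ) * (q / 2 - 1) = q - 2 by ring]
    ring
  rwa [e1, e2] at h

theorem hasFDerivAt_gD1 (p : ℝ) (hp : 2 ≤ p) (z : E) :
    HasFDerivAt (fun z : E => gD1 p z) (gD2 p z) z := by
  by_cases hz : z ≠ 0
  · have hc : HasFDerivAt (fun z : E => p * ‖z‖ ^ (p - 2))
        ((p * (p - 2) * ‖z‖ ^ (p - 4)) • innerSL ℝ z) z := by
      have := (hasFDerivAt_norm_rpow_ne_zero hz (p - 2)).const_mul p
      rw [smul_smul, show p - 2 - 2 = p - 4 by ring] at this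
      convert this using 2 <;> try rfl
      ring
    have hf : HasFDerivAt (fun z : E => innerSL ℝ z) (innerCLM E) z :=
      (innerCLM E).hasFDerivAt
    have := hc.smul hf
    convert this using 1 <;> try rfl
    rw [gD2]
    congr 1
    ext w v
    simp
    ring
  · push_neg at hz
    subst hz
    rcases eq_or_lt_of_le hp with hp2 | hp2
    · -- p = 2
      subst hp2
      have e : (fun z : E => gD1 2 z) = fun z : E => ((2 : ℝ) • innerCLM E) z := by
        funext z
        simp [gD1, innerCLM]
      rw [e]
      have h := ((2 : ℝ) • innerCLM E).hasFDerivAt (x := (0 : E))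
      convert h using 1 <;> try rfl
      rw [gD2]
      ext w v
      simp [innerCLM]
    · -- p > 2
      have hD0 : gD2 p (0 : E) = 0 := gD2_zero p (by linarith)
      rw [hD0, hasFDerivAt_iff_isLittleO]
      have hg0 : gD1 p (0 : E) = 0 := by simp [gD1]
      have hb : ∀ z : E, ‖gD1 p z‖ ≤ p * ‖z‖ ^ (p - 2) * ‖z‖ := by
        intro z
        rw [gD1]
        refine le_trans (norm_smul_le (p * ‖z‖ ^ (p - 2)) (innerSL ℝ z)) ?_
        rw [innerSL_apply_norm]
        gcongr
        rw [Real.norm_eq_abs, abs_of_nonneg (by positivity)]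
      calc (fun z : E => gD1 p z - gD1 p 0 - (0 : E →L[ℝ] E →L[ℝ] ℝ) z)
          = fun z : E => gD1 p z := by simp [hg0]
        _ =O[𝓝 0] (fun z : E => ‖z‖ ^ (p - 2) * ‖z‖) := by
            refine IsBigO.of_bound p (Filter.Eventually.of_forall fun z => ?_)
            calc ‖gD1 p z‖ ≤ p * ‖z‖ ^ (p - 2) * ‖z‖ := hb z
              _ ≤ p * ‖‖z‖ ^ (p - 2) * ‖z‖‖ := by
                  rw [mul_assoc]; gcongr; exact le_abs_self _
        _ =o[𝓝 0] (fun z : E => z - 0) := by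
            simp only [sub_zero]
            have h1 : (fun z : E => ‖z‖ ^ (p - 2)) =o[𝓝 0] (fun _ : E => (1 : ℝ)) := by
              refine (isLittleO_const_iff one_ne_zero).mpr ?_
              have : ContinuousAt (fun z : E => ‖z‖ ^ (p - 2)) 0 :=
                continuousAt_id.norm.rpow_const (Or.inr (by linarith))
              simpa [Real.zero_rpow (by intro h; linarith [sub_eq_zero.mp h] : p - 2 ≠ 0)]
                using this.tendsto
            rw [← isLittleO_norm_right]
            simpa using h1.mul_isBigO (isBigO_refl (fun z : E => ‖z‖) (𝓝 0))

theorem norm_gD2_le (p : ℝ) (hp : 2 ≤ p) (z : E) :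
    ‖gD2 p z‖ ≤ p * (p - 1) * ‖z‖ ^ (p - 2) := by
  have hp0 : (0:ℝ) ≤ p := by linarith
  have hp1 : (0:ℝ) ≤ p - 1 := by linarith
  have hp2 : (0:ℝ) ≤ p - 2 := by linarith
  have hz2 : (0:ℝ) ≤ ‖z‖ ^ (p - 2) := Real.rpow_nonneg (norm_nonneg z) _
  have hz4 : (0:ℝ) ≤ ‖z‖ ^ (p - 4) := Real.rpow_nonneg (norm_nonneg z) _
  have hpos : (0:ℝ) ≤ p * (p - 1) * ‖z‖ ^ (p - 2) :=
    mul_nonneg (mul_nonneg hp0 hp1) hz2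
  refine ContinuousLinearMap.opNorm_le_bound _ hpos fun w => ?_
  refine ContinuousLinearMap.opNorm_le_bound _
    (mul_nonneg hpos (norm_nonneg w)) fun v => ?_
  rw [gD2_apply, Real.norm_eq_abs]
  have h4 : ‖z‖ ^ (p - 4) * ‖z‖ * ‖z‖ ≤ ‖z‖ ^ (p - 2) := by
    by_cases hz : z = 0
    · simp only [hz, norm_zero, mul_zero]
      exact Real.rpow_nonneg (le_refl 0) _
    · have hzn : (0:ℝ) < ‖z‖ := norm_pos_iff.mpr hz
      refine le_of_eq ?_
      rw [← Real.rpow_add_one hzn.ne' (p - 4), ← Real.rpow_add_one hzn.ne']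
      congr 1
      ring
  have t1 : |p * ‖z‖ ^ (p - 2) * ⟪w, v⟫| ≤ p * ‖z‖ ^ (p - 2) * (‖w‖ * ‖v‖) := by
    rw [abs_mul, abs_of_nonneg (mul_nonneg hp0 hz2)]
    exact mul_le_mul_of_nonneg_left (abs_real_inner_le_norm w v)
      (mul_nonneg hp0 hz2)
  have t2 : |p * (p - 2) * ‖z‖ ^ (p - 4) * ⟪z, w⟫ * ⟪z, v⟫|
      ≤ p * (p - 2) * ‖z‖ ^ (p - 4) * (‖z‖ * ‖w‖) * (‖z‖ * ‖v‖) := by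
    have hc : (0:ℝ) ≤ p * (p - 2) * ‖z‖ ^ (p - 4) :=
      mul_nonneg (mul_nonneg hp0 hp2) hz4
    rw [abs_mul, abs_mul, abs_of_nonneg hc]
    have i1 := abs_real_inner_le_norm z w
    have i2 := abs_real_inner_le_norm z v
    have := mul_le_mul (mul_le_mul_of_nonneg_left i1 hc) i2 (abs_nonneg _)
      (mul_nonneg hc (mul_nonneg (norm_nonneg z) (norm_nonneg w)))
    linarith
  calc |p * ‖z‖ ^ (p - 2) * ⟪w, v⟫ + p * (p - 2) * ‖z‖ ^ (p - 4) * ⟪z, w⟫ * ⟪z, v⟫|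
      ≤ |p * ‖z‖ ^ (p - 2) * ⟪w, v⟫| + |p * (p - 2) * ‖z‖ ^ (p - 4) * ⟪z, w⟫ * ⟪z, v⟫| :=
        abs_add_le _ _
    _ ≤ p * ‖z‖ ^ (p - 2) * (‖w‖ * ‖v‖)
        + p * (p - 2) * ‖z‖ ^ (p - 4) * (‖z‖ * ‖w‖) * (‖z‖ * ‖v‖) := add_le_add t1 t2
    _ = p * ‖z‖ ^ (p - 2) * (‖w‖ * ‖v‖)
        + p * (p - 2) * (‖z‖ ^ (p - 4) * ‖z‖ * ‖z‖) * (‖w‖ * ‖v‖) := by ring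
    _ ≤ p * ‖z‖ ^ (p - 2) * (‖w‖ * ‖v‖)
        + p * (p - 2) * ‖z‖ ^ (p - 2) * (‖w‖ * ‖v‖) := by
          gcongr
    _ = p * (p - 1) * ‖z‖ ^ (p - 2) * ‖w‖ * ‖v‖ := by ring

theorem continuous_gD2 (p : ℝ) (hp : 2 ≤ p) : Continuous (fun z : E => gD2 p z) := by
  rcases eq_or_lt_of_le hp with hp2 | hp2
  · subst hp2
    have e : (fun z : E => gD2 2 z) = fun _ : E => (2 : ℝ) • innerCLM E := by
      funext z
      rw [gD2]
      norm_num
      ext a b; simp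
    rw [e]
    exact continuous_const
  · rw [continuous_iff_continuousAt]
    intro z
    by_cases hz : z = 0
    · subst hz
      rw [ContinuousAt, gD2_zero p (by linarith)]
      refine squeeze_zero_norm (f := fun z : E => gD2 p z)
        (a := fun z : E => p * (p - 1) * ‖z‖ ^ (p - 2))
        (fun t => norm_gD2_le p hp t) ?_
      have hc : Continuous (fun z : E => p * (p - 1) * ‖z‖ ^ (p - 2)) :=
        continuous_const.mul (continuous_norm.rpow_const fun z => Or.inr (by linarith))
      have := hc.tendsto 0
      simpa [Real.zero_rpow (by intro h; linarith [sub_eq_zero.mp h] : p - 2 ≠ 0)] using this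
    · have hB : Continuous fun z : E => (innerSL ℝ z).smulRight (innerSL ℝ z) := by
        have h1 : Continuous fun z : E =>
            (ContinuousLinearMap.smulRightL ℝ E (E →L[ℝ] ℝ)) (innerSL ℝ z) :=
          (ContinuousLinearMap.smulRightL ℝ E (E →L[ℝ] ℝ)).continuous.comp
            (innerCLM E).continuous
        exact h1.clm_apply (innerCLM E).continuous
      haveI : ContinuousAdd (E →L[ℝ] E →L[ℝ] ℝ) :=
        @IsTopologicalAddGroup.toContinuousAdd _ _ ContinuousLinearMap.addCommGroup.toAddGroup inferInstance
      unfold gD2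
      refine ContinuousAt.add (f := fun z => (p * ‖z‖ ^ (p - 2)) • innerCLM E)
        (g := fun z => (p * (p - 2) * ‖z‖ ^ (p - 4)) • ((innerSL ℝ) z).smulRight ((innerSL ℝ) z)) ?_ ?_
      · exact ((continuous_const.mul
          (continuous_norm.rpow_const fun _ => Or.inr (by linarith))).smul
          continuous_const).continuousAt
      · refine ContinuousAt.smul (f := fun z : E => p * (p - 2) * ‖z‖ ^ (p - 4)) ?_ hB.continuousAt
        exact (continuousAt_const.mul
          ((continuous_norm.continuousAt).rpow_const (Or.inl (norm_ne_zero_iff.mpr hz))))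

theorem contDiff_two_norm_rpow (p : ℝ) (hp : 2 ≤ p) :
    ContDiff ℝ 2 (fun z : E => ‖z‖ ^ p) := by
  have hp1 : (1:ℝ) < p := by linarith
  have hder : ∀ z : E, HasFDerivAt (fun z : E => ‖z‖ ^ p) (gD1 p z) z := fun z =>
    hasFDerivAt_norm_rpow z hp1
  rw [show (2 : WithTop ℕ∞) = 1 + 1 from one_add_one_eq_two.symm, contDiff_succ_iff_fderiv]
  refine ⟨fun z => (hder z).differentiableAt, by simp, ?_⟩
  have e : fderiv ℝ (fun z : E => ‖z‖ ^ p) = fun z => gD1 p z :=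
    funext fun z => (hder z).fderiv
  rw [e, contDiff_one_iff_fderiv]
  refine ⟨fun z => (hasFDerivAt_gD1 p hp z).differentiableAt, ?_⟩
  have e2 : fderiv ℝ (fun z : E => gD1 p z) = fun z => gD2 p z :=
    funext fun z => (hasFDerivAt_gD1 p hp z).fderiv
  rw [e2]
  exact continuous_gD2 p hp

end Aux

/-- For `p ∈ [2,∞)` and a real Hilbert space `H`, the function
`G(x,y) = ‖x-y‖^p` on `H × H` is twice continuously Fréchet differentiable and
its partial Fréchet derivatives satisfy
`(∂G/∂x)(x,y)(v) = -(∂G/∂y)(x,y)(v) = p ‖x-y‖^(p-2) ⟨x-y,v⟩` and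
`(∂²G/∂x²)(x,y)(v,w) = (∂²G/∂y²)(x,y)(v,w) = -((∂/∂y)(∂/∂x)G)(x,y)(v,w)
  = p ‖x-y‖^(p-2) ⟨v,w⟩ + p (p-2) ‖x-y‖^(p-4) ⟨x-y,v⟩ ⟨x-y,w⟩`,
where the real powers at `x = y` follow the conventions `0^0 = 1` and
`0^t = 0` for `t ≠ 0` of the real power function. -/
theorem norm_sub_rpow_contDiff_two_and_partial_derivs
    {H : Type*} [NormedAddCommGroup H] [InnerProductSpace ℝ H] [CompleteSpace H]
    (p : ℝ) (hp : 2 ≤ p) :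
    ContDiff ℝ 2 (fun q : H × H => ‖q.1 - q.2‖ ^ p) ∧
    (∀ x y v : H,
      fderiv ℝ (fun x' : H => ‖x' - y‖ ^ p) x v
        = p * ‖x - y‖ ^ (p - 2) * ⟪x - y, v⟫ ∧
      fderiv ℝ (fun y' : H => ‖x - y'‖ ^ p) y v
        = -(p * ‖x - y‖ ^ (p - 2) * ⟪x - y, v⟫)) ∧
    (∀ x y v w : H,
      fderiv ℝ (fun x'' : H => fderiv ℝ (fun x' : H => ‖x' - y‖ ^ p) x'' v) x w
        = p * ‖x - y‖ ^ (p - 2) * ⟪v, w⟫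
          + p * (p - 2) * ‖x - y‖ ^ (p - 4) * ⟪x - y, v⟫ * ⟪x - y, w⟫ ∧
      fderiv ℝ (fun y'' : H => fderiv ℝ (fun y' : H => ‖x - y'‖ ^ p) y'' v) y w
        = p * ‖x - y‖ ^ (p - 2) * ⟪v, w⟫
          + p * (p - 2) * ‖x - y‖ ^ (p - 4) * ⟪x - y, v⟫ * ⟪x - y, w⟫ ∧
      fderiv ℝ (fun y' : H => fderiv ℝ (fun x' : H => ‖x' - y'‖ ^ p) x v) y w
        = -(p * ‖x - y‖ ^ (p - 2) * ⟪v, w⟫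
            + p * (p - 2) * ‖x - y‖ ^ (p - 4) * ⟪x - y, v⟫ * ⟪x - y, w⟫)) := by
  have hp1 : (1:ℝ) < p := by linarith
  -- first partial derivatives
  have hx' : ∀ x y : H, HasFDerivAt (fun x' : H => ‖x' - y‖ ^ p) (gD1 p (x - y)) x := by
    intro x y
    have h := (show HasFDerivAt (fun z : H => ‖z‖ ^ p) ((p * ‖x - y‖ ^ (p - 2)) • innerSL ℝ (x - y)) (x - y) from hasFDerivAt_norm_rpow (x - y) hp1).comp x ((hasFDerivAt_id x).sub_const y)
    rw [gD1]
    simpa [Function.comp_def] using h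
  have hy' : ∀ x y : H, HasFDerivAt (fun y' : H => ‖x - y'‖ ^ p) (-(gD1 p (x - y))) y := by
    intro x y
    have h := (show HasFDerivAt (fun z : H => ‖z‖ ^ p) ((p * ‖x - y‖ ^ (p - 2)) • innerSL ℝ (x - y)) (x - y) from hasFDerivAt_norm_rpow (x - y) hp1).comp y
      ((hasFDerivAt_const x y).sub (hasFDerivAt_id y))
    simp only [Function.comp_def] at h
    convert h using 1 <;> try rfl
    ext v
    simp [gD1]
  have hgx : ∀ x y : H, HasFDerivAt (fun x'' : H => gD1 p (x'' - y)) (gD2 p (x - y)) x := by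
    intro x y
    have h := (hasFDerivAt_gD1 p hp (x - y)).comp x ((hasFDerivAt_id x).sub_const y)
    simpa [Function.comp_def] using h
  have hgy : ∀ x y : H, HasFDerivAt (fun y'' : H => gD1 p (x - y'')) (-(gD2 p (x - y))) y := by
    intro x y
    have h := (hasFDerivAt_gD1 p hp (x - y)).comp y
      ((hasFDerivAt_const x y).sub (hasFDerivAt_id y))
    simp only [Function.comp_def] at h
    convert h using 1 <;> try rfl
    ext w v
    simp
  refine ⟨?_, ?_, ?_⟩
  · exact (contDiff_two_norm_rpow p hp).comp (contDiff_fst.sub contDiff_snd)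
  · intro x y v
    constructor
    · rw [(hx' x y).fderiv, gD1_apply]
    · rw [(hy' x y).fderiv, ContinuousLinearMap.neg_apply, gD1_apply]
  · intro x y v w
    refine ⟨?_, ?_, ?_⟩
    · have e : (fun x'' : H => fderiv ℝ (fun x' : H => ‖x' - y‖ ^ p) x'' v)
          = fun x'' : H => gD1 p (x'' - y) v :=
        funext fun x'' => by rw [(hx' x'' y).fderiv]
      rw [e]
      have h2 : HasFDerivAt (fun x'' : H => gD1 p (x'' - y) v)
          ((ContinuousLinearMap.apply ℝ ℝ v).comp (gD2 p (x - y))) x :=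
        (ContinuousLinearMap.apply ℝ ℝ v).hasFDerivAt.comp x (hgx x y)
      rw [h2.fderiv, ContinuousLinearMap.comp_apply, ContinuousLinearMap.apply_apply,
        gD2_apply, real_inner_comm w v]
      ring
    · have e : (fun y'' : H => fderiv ℝ (fun y' : H => ‖x - y'‖ ^ p) y'' v)
          = fun y'' : H => -(gD1 p (x - y'') v) :=
        funext fun y'' => by rw [(hy' x y'').fderiv, ContinuousLinearMap.neg_apply]
      rw [e]
      have h2 : HasFDerivAt (fun y'' : H => gD1 p (x - y'') v)
          ((ContinuousLinearMap.apply ℝ ℝ v).comp (-(gD2 p (x - y)))) y :=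
        (ContinuousLinearMap.apply ℝ ℝ v).hasFDerivAt.comp y (hgy x y)
      rw [(show HasFDerivAt (fun y'' : H => -(gD1 p (x - y'') v)) _ y from h2.neg).fderiv]
      simp only [ContinuousLinearMap.neg_apply, ContinuousLinearMap.comp_apply,
        ContinuousLinearMap.apply_apply, neg_neg]
      rw [gD2_apply, real_inner_comm w v]
      ring
    · have e : (fun y' : H => fderiv ℝ (fun x' : H => ‖x' - y'‖ ^ p) x v)
          = fun y' : H => gD1 p (x - y') v :=
        funext fun y' => by rw [(hx' x y').fderiv]
      rw [e]
      have h2 : HasFDerivAt (fun y' : H => gD1 p (x - y') v)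
          ((ContinuousLinearMap.apply ℝ ℝ v).comp (-(gD2 p (x - y)))) y :=
        (ContinuousLinearMap.apply ℝ ℝ v).hasFDerivAt.comp y (hgy x y)
      rw [h2.fderiv]
      simp only [ContinuousLinearMap.comp_apply, ContinuousLinearMap.neg_apply,
        ContinuousLinearMap.apply_apply]
      rw [gD2_apply, real_inner_comm w v]
      ring
end

section
/- Let d, m ∈ ℕ, let O ⊆ ℝ^d be a nonempty open convex set, and let μ : O → ℝ^d and σ : O → ℝ^{d×m} be continuously differentiable. Then for every p ∈ [1,∞) it holds (with suprema taken in [−∞,∞]) that sup_{x ∈ O} sup_{v ∈ ℝ^d∖{0}} [ (⟨v, μ'(x)v⟩ + ½‖σ'(x)v‖²_{HS(ℝ^m,ℝ^d)}) / ‖v‖² + (p/2 − 1)·‖(σ'(x)v)^* v‖² / ‖v‖⁴ ] is EQUAL to sup_{x, y ∈ O, x ≠ y} [ (⟨x−y, μ(x)−μ(y)⟩ + ½‖σ(x)−σ(y)‖²_{HS(ℝ^m,ℝ^d)}) / ‖x−y‖² + (p/2 − 1)·‖(σ(x)−σ(y))^*(x−y)‖² / ‖x−y‖⁴ ]. -/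
open scoped RealInnerProductSpace

open MeasureTheory intervalIntegral Filter Topology

lemma jensen_sq {g : ℝ → ℝ} (hg : ContinuousOn g (Set.Icc 0 1)) :
    (∫ t in (0:ℝ)..1, g t) ^ 2 ≤ ∫ t in (0:ℝ)..1, (g t) ^ 2 := by
  have h01 : (0:ℝ) ≤ 1 := zero_le_one
  have huIcc : Set.uIcc (0:ℝ) 1 = Set.Icc 0 1 := Set.uIcc_of_le h01
  have hI : IntervalIntegrable g volume 0 1 :=
    (huIcc ▸ hg).intervalIntegrable
  have hI2 : IntervalIntegrable (fun t => (g t)^2) volume 0 1 :=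
    (huIcc ▸ (hg.pow 2)).intervalIntegrable
  set a := ∫ t in (0:ℝ)..1, g t with ha
  have h0 : 0 ≤ ∫ t in (0:ℝ)..1, (g t - a)^2 :=
    intervalIntegral.integral_nonneg h01 (fun t _ => sq_nonneg _)
  have hexp : (∫ t in (0:ℝ)..1, (g t - a)^2)
      = (∫ t in (0:ℝ)..1, (g t)^2) - 2*a*a + a^2 := by
    have : (fun t => (g t - a)^2) = fun t => ((g t)^2 - (2*a) * g t + a^2) := by
      funext t; ring
    rw [this, intervalIntegral.integral_add ((hI2.sub (hI.const_mul (2*a)))) intervalIntegrable_const,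
      intervalIntegral.integral_sub hI2 (hI.const_mul (2*a)),
      intervalIntegral.integral_const_mul, intervalIntegral.integral_const]
    simp [← ha]
  nlinarith [h0, hexp]

open scoped RealInnerProductSpace

lemma proj_norm_sq {F : Type*} [NormedAddCommGroup F] [InnerProductSpace ℝ F]
    (u : F) (hu : u ≠ 0) (b : F) :
    ‖b - (⟪u, b⟫ / ‖u‖ ^ 2) • u‖ ^ 2 = ‖b‖ ^ 2 - ⟪u, b⟫ ^ 2 / ‖u‖ ^ 2 := by
  have hu2 : (0:ℝ) < ‖u‖ ^ 2 := pow_pos (norm_pos_iff.mpr hu) 2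
  have hn : ‖u‖ ^ 2 ≠ 0 := ne_of_gt hu2
  rw [norm_sub_sq_real, real_inner_smul_right, norm_smul, mul_pow, Real.norm_eq_abs, sq_abs,
    div_pow, real_inner_comm b u]
  field_simp
  ring

lemma jensen_quad {F : Type*} [NormedAddCommGroup F] [InnerProductSpace ℝ F] [CompleteSpace F]
    (u : F) (hu : u ≠ 0) (c₂ : ℝ) (hc : -(1/2) ≤ c₂)
    {w : ℝ → F} (hw : ContinuousOn w (Set.Icc 0 1)) :
    (1/2) * ‖∫ t in (0:ℝ)..1, w t‖ ^ 2 + c₂ * ⟪u, ∫ t in (0:ℝ)..1, w t⟫ ^ 2 / ‖u‖ ^ 2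
      ≤ ∫ t in (0:ℝ)..1, ((1/2) * ‖w t‖ ^ 2 + c₂ * ⟪u, w t⟫ ^ 2 / ‖u‖ ^ 2) := by
  have h01 : (0:ℝ) ≤ 1 := zero_le_one
  have huIcc : Set.uIcc (0:ℝ) 1 = Set.Icc 0 1 := Set.uIcc_of_le h01
  have hu2 : (0:ℝ) < ‖u‖ ^ 2 := pow_pos (norm_pos_iff.mpr hu) 2
  have hIw : IntervalIntegrable w volume 0 1 := (huIcc ▸ hw).intervalIntegrable
  set W := ∫ t in (0:ℝ)..1, w t with hWdef
  -- inner products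
  have hlam_cont : ContinuousOn (fun t => ⟪u, w t⟫) (Set.Icc 0 1) :=
    (continuous_const.inner continuous_id).comp_continuousOn hw
  have hΛ : ⟪u, W⟫ = ∫ t in (0:ℝ)..1, ⟪u, w t⟫ := by
    have := ((innerSL ℝ u).intervalIntegral_comp_comm hIw).symm
    simpa [hWdef] using this
  -- the projected function
  set f : ℝ → F := fun t => w t - (⟪u, w t⟫ / ‖u‖ ^ 2) • u with hfdef
  have hf_cont : ContinuousOn f (Set.Icc 0 1) :=
    hw.sub ((hlam_cont.div_const _).smul continuousOn_const)
  have hIf : IntervalIntegrable f volume 0 1 := (huIcc ▸ hf_cont).intervalIntegrable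
  have hintf : (∫ t in (0:ℝ)..1, f t) = W - (⟪u, W⟫ / ‖u‖ ^ 2) • u := by
    rw [hfdef]
    rw [intervalIntegral.integral_sub hIw (((huIcc ▸ ((hlam_cont.div_const _).smul
      continuousOn_const)).intervalIntegrable))]
    rw [intervalIntegral.integral_smul_const, intervalIntegral.integral_div, ← hΛ, hWdef]
  -- Jensen for ‖f‖
  have hnf : ‖W - (⟪u, W⟫ / ‖u‖ ^ 2) • u‖ ^ 2 ≤ ∫ t in (0:ℝ)..1, ‖f t‖ ^ 2 := by
    have h1 : ‖∫ t in (0:ℝ)..1, f t‖ ≤ ∫ t in (0:ℝ)..1, ‖f t‖ :=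
      intervalIntegral.norm_integral_le_integral_norm h01
    have h2 : (∫ t in (0:ℝ)..1, ‖f t‖) ^ 2 ≤ ∫ t in (0:ℝ)..1, ‖f t‖ ^ 2 :=
      jensen_sq (hf_cont.norm)
    calc ‖W - (⟪u, W⟫ / ‖u‖ ^ 2) • u‖ ^ 2 = ‖∫ t in (0:ℝ)..1, f t‖ ^ 2 := by rw [hintf]
      _ ≤ (∫ t in (0:ℝ)..1, ‖f t‖) ^ 2 := by
          apply pow_le_pow_left₀ (norm_nonneg _) h1
      _ ≤ _ := h2
  -- Jensen for the inner product
  have hlam : ⟪u, W⟫ ^ 2 ≤ ∫ t in (0:ℝ)..1, ⟪u, w t⟫ ^ 2 := by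
    rw [hΛ]; exact jensen_sq hlam_cont
  -- pointwise identity and combine
  have hk : 0 ≤ c₂ + 1/2 := by linarith
  have hIfn2 : IntervalIntegrable (fun t => ‖f t‖ ^ 2) volume 0 1 :=
    (huIcc ▸ (hf_cont.norm.pow 2)).intervalIntegrable
  have hIl2 : IntervalIntegrable (fun t => ⟪u, w t⟫ ^ 2) volume 0 1 :=
    (huIcc ▸ (hlam_cont.pow 2)).intervalIntegrable
  have hRHS : (∫ t in (0:ℝ)..1, ((1/2) * ‖w t‖ ^ 2 + c₂ * ⟪u, w t⟫ ^ 2 / ‖u‖ ^ 2))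
      = (1/2) * (∫ t in (0:ℝ)..1, ‖f t‖ ^ 2)
        + ((c₂ + 1/2) / ‖u‖ ^ 2) * (∫ t in (0:ℝ)..1, ⟪u, w t⟫ ^ 2) := by
    rw [← intervalIntegral.integral_const_mul, ← intervalIntegral.integral_const_mul,
      ← intervalIntegral.integral_add (hIfn2.const_mul _) (hIl2.const_mul _)]
    apply intervalIntegral.integral_congr
    intro t _
    have := proj_norm_sq u hu (w t)
    simp only [hfdef]
    rw [this]
    field_simp
    ring
  rw [hRHS]
  have hW2 := proj_norm_sq u hu W
  have e1 : (1/2) * ‖W‖ ^ 2 + c₂ * ⟪u, W⟫ ^ 2 / ‖u‖ ^ 2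
      = (1/2) * ‖W - (⟪u, W⟫ / ‖u‖ ^ 2) • u‖ ^ 2 + ((c₂ + 1/2) / ‖u‖ ^ 2) * ⟪u, W⟫ ^ 2 := by
    rw [hW2]; field_simp; ring
  rw [e1]
  have := div_nonneg hk (le_of_lt hu2)
  nlinarith [hnf, hlam, mul_le_mul_of_nonneg_left hlam this]

lemma phi_eq {F : Type*} [NormedAddCommGroup F] [InnerProductSpace ℝ F]
    (u : F) (hu : u ≠ 0) (p : ℝ) {m : ℕ} (a : F) (b : Fin m → F) :
    (⟪u, a⟫ + (1/2) * ∑ i, ‖b i‖ ^ 2) / ‖u‖ ^ 2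
        + (p/2 - 1) * (∑ i, ⟪b i, u⟫ ^ 2) / ‖u‖ ^ 4
      = (⟪u, a⟫ + ∑ i, ((1/2) * ‖b i‖ ^ 2 + (p/2 - 1) * ⟪u, b i⟫ ^ 2 / ‖u‖ ^ 2)) / ‖u‖ ^ 2 := by
  have hn : (‖u‖ : ℝ) ≠ 0 := norm_ne_zero_iff.mpr hu
  have hterm : ∀ i : Fin m, (1/2) * ‖b i‖ ^ 2 + (p/2 - 1) * ⟪u, b i⟫ ^ 2 / ‖u‖ ^ 2
      = (1/2) * ‖b i‖ ^ 2 + ((p/2 - 1) / ‖u‖ ^ 2) * ⟪b i, u⟫ ^ 2 := by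
    intro i; rw [real_inner_comm u (b i)]; ring
  simp_rw [hterm]
  rw [Finset.sum_add_distrib, ← Finset.mul_sum, ← Finset.mul_sum]
  field_simp
  ring

lemma key_lemma {F : Type*} [NormedAddCommGroup F] [InnerProductSpace ℝ F] [CompleteSpace F]
    {m : ℕ} (u : F) (hu : u ≠ 0) (p c : ℝ) (hp : 1 ≤ p)
    (A : ℝ → F) (B : Fin m → ℝ → F)
    (hA : ContinuousOn A (Set.Icc 0 1)) (hB : ∀ i, ContinuousOn (B i) (Set.Icc 0 1))
    (hle : ∀ t ∈ Set.Icc (0:ℝ) 1,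
      (⟪u, A t⟫ + (1/2) * ∑ i, ‖B i t‖ ^ 2) / ‖u‖ ^ 2
        + (p/2 - 1) * (∑ i, ⟪B i t, u⟫ ^ 2) / ‖u‖ ^ 4 ≤ c) :
    (⟪u, ∫ t in (0:ℝ)..1, A t⟫ + (1/2) * ∑ i, ‖∫ t in (0:ℝ)..1, B i t‖ ^ 2) / ‖u‖ ^ 2
      + (p/2 - 1) * (∑ i, ⟪∫ t in (0:ℝ)..1, B i t, u⟫ ^ 2) / ‖u‖ ^ 4 ≤ c := by
  have h01 : (0:ℝ) ≤ 1 := zero_le_one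
  have huIcc : Set.uIcc (0:ℝ) 1 = Set.Icc 0 1 := Set.uIcc_of_le h01
  have hu2 : (0:ℝ) < ‖u‖ ^ 2 := pow_pos (norm_pos_iff.mpr hu) 2
  -- the per-slot quadratic form
  set q : F → ℝ := fun b => (1/2) * ‖b‖ ^ 2 + (p/2 - 1) * ⟪u, b⟫ ^ 2 / ‖u‖ ^ 2 with hq
  have hq_cont : Continuous q := by
    apply Continuous.add
    · exact (continuous_const.mul ((continuous_norm).pow 2))
    · exact ((continuous_const.mul (((continuous_const.inner continuous_id)).pow 2)).div_const _)
  -- rewrite hypothesis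
  have hle' : ∀ t ∈ Set.Icc (0:ℝ) 1, ⟪u, A t⟫ + ∑ i, q (B i t) ≤ c * ‖u‖ ^ 2 := by
    intro t ht
    have := hle t ht
    rw [phi_eq u hu p (A t) (fun i => B i t), div_le_iff₀ hu2] at this
    exact this
  -- integrability facts
  have hIA : IntervalIntegrable A volume 0 1 := (huIcc ▸ hA).intervalIntegrable
  have hIB : ∀ i, IntervalIntegrable (B i) volume 0 1 :=
    fun i => (huIcc ▸ hB i).intervalIntegrable
  have hIqB : ∀ i, IntervalIntegrable (fun t => q (B i t)) volume 0 1 := by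
    intro i
    exact (huIcc ▸ (hq_cont.comp_continuousOn (hB i))).intervalIntegrable
  have hIinA : IntervalIntegrable (fun t => ⟪u, A t⟫) volume 0 1 := by
    exact (huIcc ▸ ((continuous_const.inner continuous_id).comp_continuousOn hA)).intervalIntegrable
  -- inner with integral
  have h1 : ⟪u, ∫ t in (0:ℝ)..1, A t⟫ = ∫ t in (0:ℝ)..1, ⟪u, A t⟫ := by
    have := ((innerSL ℝ u).intervalIntegral_comp_comm hIA).symm
    simpa using this
  -- Jensen per slot
  have h2 : ∀ i, q (∫ t in (0:ℝ)..1, B i t) ≤ ∫ t in (0:ℝ)..1, q (B i t) := by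
    intro i
    have := jensen_quad u hu (p/2 - 1) (by linarith) (hB i)
    simpa [hq] using this
  have hSq : IntervalIntegrable (fun t => ∑ i, q (B i t)) volume 0 1 := by
    have : ContinuousOn (fun t => ∑ i, q (B i t)) (Set.Icc 0 1) := by
      apply continuousOn_finset_sum
      intro i _
      exact hq_cont.comp_continuousOn (hB i)
    exact (huIcc ▸ this).intervalIntegrable
  -- combine
  have hmain : ⟪u, ∫ t in (0:ℝ)..1, A t⟫ + ∑ i, q (∫ t in (0:ℝ)..1, B i t) ≤ c * ‖u‖ ^ 2 := by
    have step1 : ⟪u, ∫ t in (0:ℝ)..1, A t⟫ + ∑ i, q (∫ t in (0:ℝ)..1, B i t)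
        ≤ (∫ t in (0:ℝ)..1, ⟪u, A t⟫) + ∑ i, ∫ t in (0:ℝ)..1, q (B i t) := by
      rw [h1]
      exact add_le_add le_rfl (Finset.sum_le_sum fun i _ => h2 i)
    have step2 : (∫ t in (0:ℝ)..1, ⟪u, A t⟫) + ∑ i, ∫ t in (0:ℝ)..1, q (B i t)
        = ∫ t in (0:ℝ)..1, (⟪u, A t⟫ + ∑ i, q (B i t)) := by
      rw [← intervalIntegral.integral_finset_sum (fun i _ => hIqB i),
        ← intervalIntegral.integral_add hIinA hSq]
    have step3 : (∫ t in (0:ℝ)..1, (⟪u, A t⟫ + ∑ i, q (B i t))) ≤ c * ‖u‖ ^ 2 := by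
      have := intervalIntegral.integral_mono_on h01
        (hIinA.add hSq)
        (_root_.intervalIntegrable_const (c := c * ‖u‖ ^ 2)) hle'
      simpa using this
    linarith [step1, step2.le, step2.ge, step3]
  rw [phi_eq u hu p _ (fun i => ∫ t in (0:ℝ)..1, B i t), div_le_iff₀ hu2]
  exact hmain

lemma ftc_segment {F G : Type*} [NormedAddCommGroup F] [NormedSpace ℝ F]
    [NormedAddCommGroup G] [NormedSpace ℝ G] [CompleteSpace G]
    {O : Set F} (hO : IsOpen O) (hconv : Convex ℝ O)
    {f : F → G} (hf : ContDiffOn ℝ 1 f O) {x y : F} (hx : x ∈ O) (hy : y ∈ O) :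
    f x - f y = ∫ t in (0:ℝ)..1, fderiv ℝ f (y + t • (x - y)) (x - y) := by
  have h01 : (0:ℝ) ≤ 1 := zero_le_one
  have huIcc : Set.uIcc (0:ℝ) 1 = Set.Icc 0 1 := Set.uIcc_of_le h01
  set γ : ℝ → F := fun t => y + t • (x - y) with hγdef
  have hseg : ∀ t ∈ Set.Icc (0:ℝ) 1, γ t ∈ O := fun t ht =>
    hconv.add_smul_sub_mem hy hx ht
  have hdiff : ∀ z ∈ O, DifferentiableAt ℝ f z := fun z hz =>
    (hf.differentiableOn one_ne_zero).differentiableAt (hO.mem_nhds hz)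
  have hγc : Continuous γ := by fun_prop
  have hγmaps : Set.MapsTo γ (Set.Icc 0 1) O := fun t ht => hseg t ht
  have hfd_cont : ContinuousOn (fun t => fderiv ℝ f (γ t) (x - y)) (Set.Icc 0 1) := by
    have h1 : ContinuousOn (fderiv ℝ f) O := hf.continuousOn_fderiv_of_isOpen hO le_rfl
    exact (h1.comp hγc.continuousOn hγmaps).clm_apply continuousOn_const
  have hD : ∀ t ∈ Set.uIcc (0:ℝ) 1,
      HasDerivAt (fun s => f (γ s)) (fderiv ℝ f (γ t) (x - y)) t := by
    intro t ht
    rw [huIcc] at ht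
    have hγ' : HasDerivAt γ (x - y) t := by
      have h := ((hasDerivAt_id t).smul_const (x - y)).const_add y
      rw [one_smul] at h
      exact h
    exact ((hdiff _ (hseg t ht)).hasFDerivAt.comp_hasDerivAt t hγ')
  have hInt : IntervalIntegrable (fun t => fderiv ℝ f (γ t) (x - y)) volume 0 1 :=
    (huIcc ▸ hfd_cont).intervalIntegrable
  have := intervalIntegral.integral_eq_sub_of_hasDerivAt hD hInt
  rw [this, hγdef]
  simp

lemma phi_scale {F : Type*} [NormedAddCommGroup F] [InnerProductSpace ℝ F]
    (v : F) (hv : v ≠ 0) (p : ℝ) {m : ℕ} {t : ℝ} (ht : t ≠ 0) (a : F) (b : Fin m → F) :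
    (⟪t • v, a⟫ + (1/2) * ∑ i, ‖b i‖ ^ 2) / ‖t • v‖ ^ 2
        + (p/2 - 1) * (∑ i, ⟪b i, t • v⟫ ^ 2) / ‖t • v‖ ^ 4
      = (⟪v, t⁻¹ • a⟫ + (1/2) * ∑ i, ‖t⁻¹ • b i‖ ^ 2) / ‖v‖ ^ 2
        + (p/2 - 1) * (∑ i, ⟪t⁻¹ • b i, v⟫ ^ 2) / ‖v‖ ^ 4 := by
  have hn : (‖v‖ : ℝ) ≠ 0 := norm_ne_zero_iff.mpr hv
  simp_rw [norm_smul, real_inner_smul_left, real_inner_smul_right, mul_pow,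
    Real.norm_eq_abs, sq_abs]
  simp_rw [← Finset.mul_sum]
  have habs : |t| ^ 4 = t ^ 4 := by rw [pow_abs, abs_of_nonneg (by positivity)]
  rw [habs]
  field_simp

lemma cont_fderiv_segment {F G : Type*} [NormedAddCommGroup F] [NormedSpace ℝ F]
    [NormedAddCommGroup G] [NormedSpace ℝ G]
    {O : Set F} (hO : IsOpen O) (hconv : Convex ℝ O)
    {f : F → G} (hf : ContDiffOn ℝ 1 f O) {x y : F} (hx : x ∈ O) (hy : y ∈ O) :
    ContinuousOn (fun t : ℝ => fderiv ℝ f (y + t • (x - y)) (x - y)) (Set.Icc 0 1) := by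
  have hseg : ∀ t ∈ Set.Icc (0:ℝ) 1, y + t • (x - y) ∈ O := fun t ht =>
    hconv.add_smul_sub_mem hy hx ht
  have hγc : Continuous fun t : ℝ => y + t • (x - y) := by fun_prop
  have h1 : ContinuousOn (fderiv ℝ f) O := hf.continuousOn_fderiv_of_isOpen hO le_rfl
  exact (h1.comp hγc.continuousOn fun t ht => hseg t ht).clm_apply continuousOn_const


/-- On a convex open set, for `p ∈ [1,∞)` the global supremum of the
derivative-based monotonicity/coercivity expression is EQUAL to the global
supremum of the corresponding difference-quotient expression (suprema in the
extended reals). -/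
theorem sup_deriv_eq_sup_difference_quotient
    (d m : ℕ) (hd : 0 < d) (hm : 0 < m)
    (O : Set (EuclideanSpace ℝ (Fin d))) (hO : IsOpen O) (hOne : O.Nonempty)
    (hconv : Convex ℝ O)
    (μ : EuclideanSpace ℝ (Fin d) → EuclideanSpace ℝ (Fin d))
    (σ : Fin m → EuclideanSpace ℝ (Fin d) → EuclideanSpace ℝ (Fin d))
    (hμ : ContDiffOn ℝ 1 μ O) (hσ : ∀ i, ContDiffOn ℝ 1 (σ i) O)
    (p : ℝ) (hp : 1 ≤ p) :
    (⨆ x ∈ O, ⨆ v ∈ {v : EuclideanSpace ℝ (Fin d) | v ≠ 0},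
      (((⟪v, fderiv ℝ μ x v⟫ + (1 / 2) * ∑ i, ‖fderiv ℝ (σ i) x v‖ ^ 2) / ‖v‖ ^ 2
          + (p / 2 - 1) * (∑ i, ⟪fderiv ℝ (σ i) x v, v⟫ ^ 2) / ‖v‖ ^ 4 : ℝ) : EReal))
      = ⨆ x ∈ O, ⨆ y ∈ O, ⨆ (_ : x ≠ y),
      (((⟪x - y, μ x - μ y⟫ + (1 / 2) * ∑ i, ‖σ i x - σ i y‖ ^ 2) / ‖x - y‖ ^ 2
          + (p / 2 - 1) * (∑ i, ⟪σ i x - σ i y, x - y⟫ ^ 2) / ‖x - y‖ ^ 4 : ℝ) : EReal) := by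
  have hdiffμ : ∀ z ∈ O, DifferentiableAt ℝ μ z := fun z hz =>
    (hμ.differentiableOn one_ne_zero).differentiableAt (hO.mem_nhds hz)
  have hdiffσ : ∀ (i : Fin m), ∀ z ∈ O, DifferentiableAt ℝ (σ i) z := fun i z hz =>
    ((hσ i).differentiableOn one_ne_zero).differentiableAt (hO.mem_nhds hz)
  apply le_antisymm
  · -- derivative sup ≤ difference quotient sup
    refine iSup₂_le fun x hx => iSup₂_le fun v hv => ?_
    have hv' : v ≠ 0 := hv
    set g : ℝ → ℝ := fun t =>
      (⟪v, t⁻¹ • (μ (x + t • v) - μ x)⟫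
          + (1 / 2) * ∑ i, ‖t⁻¹ • (σ i (x + t • v) - σ i x)‖ ^ 2) / ‖v‖ ^ 2
        + (p / 2 - 1) * (∑ i, ⟪t⁻¹ • (σ i (x + t • v) - σ i x), v⟫ ^ 2) / ‖v‖ ^ 4 with hgdef
    have hA : Tendsto (fun t : ℝ => t⁻¹ • (μ (x + t • v) - μ x)) (𝓝[≠] (0:ℝ))
        (𝓝 (fderiv ℝ μ x v)) :=
      ((hdiffμ x hx).hasFDerivAt.hasLineDerivAt v).tendsto_slope_zero
    have hB : ∀ i, Tendsto (fun t : ℝ => t⁻¹ • (σ i (x + t • v) - σ i x)) (𝓝[≠] (0:ℝ))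
        (𝓝 (fderiv ℝ (σ i) x v)) := fun i =>
      ((hdiffσ i x hx).hasFDerivAt.hasLineDerivAt v).tendsto_slope_zero
    have hgt : Tendsto g (𝓝[≠] (0:ℝ))
        (𝓝 ((⟪v, fderiv ℝ μ x v⟫ + (1 / 2) * ∑ i, ‖fderiv ℝ (σ i) x v‖ ^ 2) / ‖v‖ ^ 2
          + (p / 2 - 1) * (∑ i, ⟪fderiv ℝ (σ i) x v, v⟫ ^ 2) / ‖v‖ ^ 4)) := by
      apply Tendsto.add
      · apply Tendsto.div_const
        exact (tendsto_const_nhds.inner hA).add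
          (tendsto_const_nhds.mul (tendsto_finset_sum _ fun i _ => ((hB i).norm.pow 2)))
      · apply Tendsto.div_const
        exact tendsto_const_nhds.mul
          (tendsto_finset_sum _ fun i _ => (((hB i).inner tendsto_const_nhds).pow 2))
    have hmem : ∀ᶠ t : ℝ in 𝓝[≠] (0:ℝ), x + t • v ∈ O := by
      have hcont : Continuous fun t : ℝ => x + t • v := by fun_prop
      have hc : Tendsto (fun t : ℝ => x + t • v) (𝓝 0) (𝓝 x) := by
        simpa using hcont.tendsto 0
      exact (hc.eventually (hO.eventually_mem hx)).filter_mono nhdsWithin_le_nhds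
    have hev : ∀ᶠ t : ℝ in 𝓝[≠] (0:ℝ), ((g t : ℝ) : EReal)
        ≤ ⨆ x ∈ O, ⨆ y ∈ O, ⨆ (_ : x ≠ y),
          (((⟪x - y, μ x - μ y⟫ + (1 / 2) * ∑ i, ‖σ i x - σ i y‖ ^ 2) / ‖x - y‖ ^ 2
            + (p / 2 - 1) * (∑ i, ⟪σ i x - σ i y, x - y⟫ ^ 2) / ‖x - y‖ ^ 4 : ℝ) : EReal) := by
      filter_upwards [hmem, eventually_mem_nhdsWithin] with t htO ht0
      have ht : t ≠ 0 := ht0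
      have hne : x + t • v ≠ x := by
        intro h
        rcases smul_eq_zero.mp (add_eq_left.mp h) with h' | h'
        · exact ht h'
        · exact hv' h'
      have hgeq : g t = (⟪(x + t • v) - x, μ (x + t • v) - μ x⟫
            + (1 / 2) * ∑ i, ‖σ i (x + t • v) - σ i x‖ ^ 2) / ‖(x + t • v) - x‖ ^ 2
          + (p / 2 - 1) * (∑ i, ⟪σ i (x + t • v) - σ i x, (x + t • v) - x⟫ ^ 2)
            / ‖(x + t • v) - x‖ ^ 4 := by
        rw [add_sub_cancel_left]
        exact (phi_scale v hv' p ht (μ (x + t • v) - μ x)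
          (fun i => σ i (x + t • v) - σ i x)).symm
      rw [hgeq]
      exact le_iSup₂_of_le (x + t • v) htO (le_iSup₂_of_le x hx
        (le_iSup_of_le hne le_rfl))
    exact le_of_tendsto ((continuous_coe_real_ereal.tendsto _).comp hgt) hev
  · -- difference quotient sup ≤ derivative sup
    refine iSup₂_le fun x hx => iSup₂_le fun y hy => iSup_le fun hne => ?_
    have hu : x - y ≠ 0 := sub_ne_zero.mpr hne
    have hFle : ∀ z ∈ O, ∀ w : EuclideanSpace ℝ (Fin d), w ≠ 0 →
        (((⟪w, fderiv ℝ μ z w⟫ + (1 / 2) * ∑ i, ‖fderiv ℝ (σ i) z w‖ ^ 2) / ‖w‖ ^ 2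
          + (p / 2 - 1) * (∑ i, ⟪fderiv ℝ (σ i) z w, w⟫ ^ 2) / ‖w‖ ^ 4 : ℝ) : EReal)
        ≤ ⨆ x ∈ O, ⨆ v ∈ {v : EuclideanSpace ℝ (Fin d) | v ≠ 0},
          (((⟪v, fderiv ℝ μ x v⟫ + (1 / 2) * ∑ i, ‖fderiv ℝ (σ i) x v‖ ^ 2) / ‖v‖ ^ 2
            + (p / 2 - 1) * (∑ i, ⟪fderiv ℝ (σ i) x v, v⟫ ^ 2) / ‖v‖ ^ 4 : ℝ) : EReal) :=
      fun z hz w hw => le_iSup₂_of_le z hz (le_iSup₂_of_le w hw le_rfl)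
    by_cases htop : (⨆ x ∈ O, ⨆ v ∈ {v : EuclideanSpace ℝ (Fin d) | v ≠ 0},
        (((⟪v, fderiv ℝ μ x v⟫ + (1 / 2) * ∑ i, ‖fderiv ℝ (σ i) x v‖ ^ 2) / ‖v‖ ^ 2
          + (p / 2 - 1) * (∑ i, ⟪fderiv ℝ (σ i) x v, v⟫ ^ 2) / ‖v‖ ^ 4 : ℝ) : EReal)) = ⊤
    · rw [htop]; exact le_top
    · have hbot : (⨆ x ∈ O, ⨆ v ∈ {v : EuclideanSpace ℝ (Fin d) | v ≠ 0},
          (((⟪v, fderiv ℝ μ x v⟫ + (1 / 2) * ∑ i, ‖fderiv ℝ (σ i) x v‖ ^ 2) / ‖v‖ ^ 2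
            + (p / 2 - 1) * (∑ i, ⟪fderiv ℝ (σ i) x v, v⟫ ^ 2) / ‖v‖ ^ 4 : ℝ) : EReal)) ≠ ⊥ := by
        intro h
        have := hFle x hx (x - y) hu
        rw [h] at this
        exact ((EReal.bot_lt_coe _).not_ge) this
      obtain ⟨c, hc⟩ : ∃ c : ℝ, (⨆ x ∈ O, ⨆ v ∈ {v : EuclideanSpace ℝ (Fin d) | v ≠ 0},
          (((⟪v, fderiv ℝ μ x v⟫ + (1 / 2) * ∑ i, ‖fderiv ℝ (σ i) x v‖ ^ 2) / ‖v‖ ^ 2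
            + (p / 2 - 1) * (∑ i, ⟪fderiv ℝ (σ i) x v, v⟫ ^ 2) / ‖v‖ ^ 4 : ℝ) : EReal))
          = (c : EReal) := ⟨_, (EReal.coe_toReal htop hbot).symm⟩
      rw [hc]
      have hbound : ∀ z ∈ O, ∀ w : EuclideanSpace ℝ (Fin d), w ≠ 0 →
          (⟪w, fderiv ℝ μ z w⟫ + (1 / 2) * ∑ i, ‖fderiv ℝ (σ i) z w‖ ^ 2) / ‖w‖ ^ 2
            + (p / 2 - 1) * (∑ i, ⟪fderiv ℝ (σ i) z w, w⟫ ^ 2) / ‖w‖ ^ 4 ≤ c := by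
        intro z hz w hw
        have := hFle z hz w hw
        rw [hc] at this
        exact_mod_cast this
      rw [EReal.coe_le_coe_iff]
      have hkey := key_lemma (x - y) hu p c hp
        (fun t => fderiv ℝ μ (y + t • (x - y)) (x - y))
        (fun i t => fderiv ℝ (σ i) (y + t • (x - y)) (x - y))
        (cont_fderiv_segment hO hconv hμ hx hy)
        (fun i => cont_fderiv_segment hO hconv (hσ i) hx hy)
        (fun t ht => hbound (y + t • (x - y)) (hconv.add_smul_sub_mem hy hx ht) (x - y) hu)
      have hσint : ∀ i, (∫ t in (0:ℝ)..1, fderiv ℝ (σ i) (y + t • (x - y)) (x - y))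
          = σ i x - σ i y := fun i => (ftc_segment hO hconv (hσ i) hx hy).symm
      rw [← ftc_segment hO hconv hμ hx hy] at hkey
      simp only [hσint] at hkey
      exact hkey
end

section
/- For every p ∈ (0,1) there exist continuously differentiable functions μ, σ : ℝ → ℝ and real numbers x, y ∈ ℝ with x ≠ y such that sup_{z ∈ ℝ} ( μ'(z) + ((p−1)/2)·(σ'(z))² ) < (μ(x)−μ(y))/(x−y) + ((p−1)/2)·(σ(x)−σ(y))²/(x−y)². In other words, the identity between the supremum of the derivative-based monotonicity expression and the supremum of the corresponding difference-quotient expression (which holds for all p ∈ [1,∞) in dimension d = m = 1) fails in general for p ∈ (0,1). -/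
/-- For every `p ∈ (0,1)` there exist `C¹` functions `μ, σ : ℝ → ℝ` and points
`x ≠ y` such that the supremum (in the extended reals) of the derivative-based
monotonicity expression is strictly smaller than the corresponding
difference-quotient expression; i.e. the identity valid for `p ∈ [1,∞)` fails
for `p ∈ (0,1)`. -/
theorem deriv_sup_lt_difference_quotient_of_p_lt_one
    (p : ℝ) (hp : p ∈ Set.Ioo (0 : ℝ) 1) :
    ∃ (μ σ : ℝ → ℝ) (x y : ℝ), ContDiff ℝ 1 μ ∧ ContDiff ℝ 1 σ ∧ x ≠ y ∧
      (⨆ z : ℝ, ((deriv μ z + (p - 1) / 2 * (deriv σ z) ^ 2 : ℝ) : EReal))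
        < (((μ x - μ y) / (x - y)
            + (p - 1) / 2 * (σ x - σ y) ^ 2 / (x - y) ^ 2 : ℝ) : EReal) := by
  obtain ⟨hp0, hp1⟩ := hp
  set ε : ℝ := (1 - p) / 8 with hε
  refine ⟨fun z => z + ε * Real.sin (2 * z), Real.sin, Real.pi, -Real.pi, ?_, ?_, ?_, ?_⟩
  · exact contDiff_id.add (contDiff_const.mul (Real.contDiff_sin.comp (contDiff_const.mul contDiff_id)))
  · exact Real.contDiff_sin
  · have := Real.pi_pos; intro h; linarith [h]
  · have hdμ : ∀ z : ℝ, deriv (fun z => z + ε * Real.sin (2 * z)) z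
        = 1 + ε * (2 * Real.cos (2 * z)) := by
      intro z
      have h1 : HasDerivAt (fun z : ℝ => z + ε * Real.sin (2 * z))
          (1 + ε * (Real.cos (2 * z) * 2)) z := by
        have hs : HasDerivAt (fun z : ℝ => Real.sin (2 * z)) (Real.cos (2 * z) * 2) z := by
          have h := (Real.hasDerivAt_sin (2 * z)).comp z
            ((hasDerivAt_id z).const_mul 2)
          simp at h; exact h
        exact (hasDerivAt_id z).add (hs.const_mul ε)
      rw [h1.deriv]; ring
    have hdσ : ∀ z : ℝ, deriv Real.sin z = Real.cos z := fun z => Real.deriv_sin ▸ rfl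
    have hconst : ∀ z : ℝ,
        (deriv (fun z => z + ε * Real.sin (2 * z)) z
          + (p - 1) / 2 * (deriv Real.sin z) ^ 2 : ℝ) = (3 + p) / 4 := by
      intro z
      rw [hdμ z, hdσ z, Real.cos_two_mul]
      have hc := Real.sin_sq_add_cos_sq z
      rw [hε]; nlinarith [Real.cos_sq_le_one z]
    have hsup : (⨆ z : ℝ, ((deriv (fun z => z + ε * Real.sin (2 * z)) z
          + (p - 1) / 2 * (deriv Real.sin z) ^ 2 : ℝ) : EReal)) = ((3 + p) / 4 : ℝ) := by
      simp only [hconst]; exact iSup_const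
    rw [hsup]
    have hx : ((Real.pi + ε * Real.sin (2 * Real.pi)) - (-Real.pi + ε * Real.sin (2 * -Real.pi)))
        / (Real.pi - -Real.pi)
        + (p - 1) / 2 * (Real.sin Real.pi - Real.sin (-Real.pi)) ^ 2
          / (Real.pi - -Real.pi) ^ 2 = 1 := by
      have h2 : Real.sin (2 * Real.pi) = 0 := Real.sin_two_pi
      have h3 : Real.sin (2 * -Real.pi) = 0 := by
        rw [show (2 : ℝ) * -Real.pi = -(2 * Real.pi) by ring, Real.sin_neg, h2, neg_zero]
      rw [h2, h3, Real.sin_pi, Real.sin_neg, Real.sin_pi]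
      have hπ : Real.pi ≠ 0 := Real.pi_ne_zero
      field_simp
      ring
    rw [show ((fun z => z + ε * Real.sin (2 * z)) Real.pi
        - (fun z => z + ε * Real.sin (2 * z)) (-Real.pi)) / (Real.pi - -Real.pi)
        + (p - 1) / 2 * (Real.sin Real.pi - Real.sin (-Real.pi)) ^ 2
          / (Real.pi - -Real.pi) ^ 2 = (1 : ℝ) from hx]
    exact_mod_cast (by linarith : (3 + p) / 4 < (1 : ℝ))
end

section
/- Let D ⊆ ℝ² be a nonempty bounded measurable set equipped with Lebesgue measure. Then for all u₁, v₁ ∈ L⁶(D; ℝ) and all u₂, v₂ ∈ L²(D; ℝ) it holds that ∫_D (u₂(s) − v₂(s)) (v₁(s)³ − u₁(s)³) ds ≤ 6 (‖u₁‖²_{L⁶(D;ℝ)} + ‖v₁‖²_{L⁶(D;ℝ)}) (‖u₁ − v₁‖²_{L⁶(D;ℝ)} + ‖u₂ − v₂‖²_{L²(D;ℝ)}). (Note that u₁³, v₁³ ∈ L²(D;ℝ) since u₁, v₁ ∈ L⁶(D;ℝ), so the integral is well defined.) -/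
open MeasureTheory
open scoped ENNReal

private theorem wave_aux_e1 : (1:ℝ≥0∞)/1 = 1/2 + 1/2 := by
  rw [div_one, ENNReal.div_add_div_same, ENNReal.eq_div_iff (by norm_num) (by norm_num)]
  norm_num

private theorem wave_aux_e2 : (1:ℝ≥0∞)/2 = 1/6 + 1/3 := by
  have h3 : (1:ℝ≥0∞)/3 = 2/6 := by
    rw [ENNReal.div_eq_div_iff (by norm_num) (by norm_num) (by norm_num) (by norm_num)]; norm_num
  rw [h3, ENNReal.div_add_div_same,
    ENNReal.div_eq_div_iff (by norm_num) (by norm_num) (by norm_num) (by norm_num)]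
  norm_num

private theorem wave_aux_e3 : (1:ℝ≥0∞)/3 = 1/6 + 1/6 := by
  rw [ENNReal.div_add_div_same,
    ENNReal.div_eq_div_iff (by norm_num) (by norm_num) (by norm_num) (by norm_num)]
  norm_num

/-- Hölder's inequality for a pointwise product of real functions. -/
private theorem wave_aux_holder_mul {α : Type*} [MeasurableSpace α] {μ : Measure α}
    {f g : α → ℝ} {p q r : ℝ≥0∞}
    (hf : AEStronglyMeasurable f μ) (hg : AEStronglyMeasurable g μ)
    (hpqr : 1/p = 1/q + 1/r) :
    eLpNorm (fun x => f x * g x) p μ ≤ eLpNorm f q μ * eLpNorm g r μ :=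
  by
    have : ENNReal.HolderTriple q r p := ⟨by simpa [one_div] using hpqr.symm⟩
    simpa using eLpNorm_le_eLpNorm_mul_eLpNorm_of_nnnorm hf hg (· * ·) 1
      (Filter.Eventually.of_forall fun x => by simp [nnnorm_mul])

private theorem wave_aux_memlp_mul {α : Type*} [MeasurableSpace α] {μ : Measure α}
    {f g : α → ℝ} {p q r : ℝ≥0∞}
    (hf : MemLp f q μ) (hg : MemLp g r μ) (hpqr : 1/p = 1/q + 1/r) :
    MemLp (fun x => f x * g x) p μ := by
  have : ENNReal.HolderTriple q r p := ⟨by simpa [one_div] using hpqr.symm⟩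
  exact MemLp.smul hg hf

private theorem wave_aux_int_le {α : Type*} [MeasurableSpace α] {μ : Measure α}
    {h : α → ℝ} (hh : MemLp h 1 μ) :
    ∫ x, h x ∂μ ≤ (eLpNorm h 1 μ).toReal := by
  rw [eLpNorm_one_eq_lintegral_enorm, ← integral_norm_eq_lintegral_enorm hh.1]
  calc ∫ x, h x ∂μ ≤ |∫ x, h x ∂μ| := le_abs_self _
    _ = ‖∫ x, h x ∂μ‖ := (Real.norm_eq_abs _).symm
    _ ≤ ∫ x, ‖h x‖ ∂μ := norm_integral_le_integral_norm _

/-- Estimate controlling the cubic nonlinearity `u ↦ -u³` of a stochastic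
non-linear wave equation in terms of `L⁶` and `L²` norms on a nonempty bounded
measurable set `D ⊆ ℝ²`. -/
theorem wave_cubic_nonlinearity_estimate
    (D : Set (EuclideanSpace ℝ (Fin 2))) (hD : D.Nonempty)
    (hDb : Bornology.IsBounded D) (hDm : MeasurableSet D)
    (u₁ v₁ u₂ v₂ : EuclideanSpace ℝ (Fin 2) → ℝ)
    (hu₁ : MemLp u₁ 6 (volume.restrict D)) (hv₁ : MemLp v₁ 6 (volume.restrict D))
    (hu₂ : MemLp u₂ 2 (volume.restrict D)) (hv₂ : MemLp v₂ 2 (volume.restrict D)) :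
    ∫ s in D, (u₂ s - v₂ s) * ((v₁ s) ^ 3 - (u₁ s) ^ 3)
      ≤ 6 * ((eLpNorm u₁ 6 (volume.restrict D)).toReal ^ 2
              + (eLpNorm v₁ 6 (volume.restrict D)).toReal ^ 2)
          * ((eLpNorm (u₁ - v₁) 6 (volume.restrict D)).toReal ^ 2
              + (eLpNorm (u₂ - v₂) 2 (volume.restrict D)).toReal ^ 2) := by
  set μ : Measure (EuclideanSpace ℝ (Fin 2)) := volume.restrict D with hμdef
  -- the relevant functions
  set f : EuclideanSpace ℝ (Fin 2) → ℝ := fun s => u₂ s - v₂ s with hf_def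
  set g : EuclideanSpace ℝ (Fin 2) → ℝ := fun s => (v₁ s) ^ 3 - (u₁ s) ^ 3 with hg_def
  set q3 : EuclideanSpace ℝ (Fin 2) → ℝ :=
    fun s => v₁ s * v₁ s + v₁ s * u₁ s + u₁ s * u₁ s with hq3_def
  -- membership facts
  have hvv : MemLp (fun s => v₁ s * v₁ s) 3 μ := wave_aux_memlp_mul hv₁ hv₁ wave_aux_e3
  have hvu : MemLp (fun s => v₁ s * u₁ s) 3 μ := wave_aux_memlp_mul hv₁ hu₁ wave_aux_e3
  have huu : MemLp (fun s => u₁ s * u₁ s) 3 μ := wave_aux_memlp_mul hu₁ hu₁ wave_aux_e3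
  have hq3 : MemLp q3 3 μ := (hvv.add hvu).add huu
  have hsub1 : MemLp (fun s => v₁ s - u₁ s) 6 μ := hv₁.sub hu₁
  have hgeq : g = fun s => (v₁ s - u₁ s) * q3 s := by
    funext s; simp only [hg_def, hq3_def]; ring
  have hg2 : MemLp g 2 μ := by
    rw [hgeq]; exact wave_aux_memlp_mul hsub1 hq3 wave_aux_e2
  have hf2 : MemLp f 2 μ := hu₂.sub hv₂
  have hfg : MemLp (fun s => f s * g s) 1 μ := wave_aux_memlp_mul hf2 hg2 wave_aux_e1
  -- notation for the norms
  set A : ℝ≥0∞ := eLpNorm u₁ 6 μ with hA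
  set B : ℝ≥0∞ := eLpNorm v₁ 6 μ with hB
  set C : ℝ≥0∞ := eLpNorm (u₁ - v₁) 6 μ with hC
  set E : ℝ≥0∞ := eLpNorm (u₂ - v₂) 2 μ with hE
  have hCsub : eLpNorm (fun s => v₁ s - u₁ s) 6 μ = C := by
    rw [hC]; exact eLpNorm_sub_comm v₁ u₁ 6 μ
  have hfE : eLpNorm f 2 μ = E := rfl
  -- the eLpNorm chain
  have step4a : eLpNorm (fun s => v₁ s * v₁ s) 3 μ ≤ B * B :=
    wave_aux_holder_mul hv₁.1 hv₁.1 wave_aux_e3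
  have step4b : eLpNorm (fun s => v₁ s * u₁ s) 3 μ ≤ B * A :=
    wave_aux_holder_mul hv₁.1 hu₁.1 wave_aux_e3
  have step4c : eLpNorm (fun s => u₁ s * u₁ s) 3 μ ≤ A * A :=
    wave_aux_holder_mul hu₁.1 hu₁.1 wave_aux_e3
  have step3 : eLpNorm q3 3 μ ≤ B * B + B * A + A * A := by
    have h1 : eLpNorm q3 3 μ
        ≤ eLpNorm (fun s => v₁ s * v₁ s + v₁ s * u₁ s) 3 μ
          + eLpNorm (fun s => u₁ s * u₁ s) 3 μ :=
      eLpNorm_add_le (hvv.1.add hvu.1) huu.1 (by norm_num)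
    have h2 : eLpNorm (fun s => v₁ s * v₁ s + v₁ s * u₁ s) 3 μ
        ≤ eLpNorm (fun s => v₁ s * v₁ s) 3 μ + eLpNorm (fun s => v₁ s * u₁ s) 3 μ :=
      eLpNorm_add_le hvv.1 hvu.1 (by norm_num)
    calc eLpNorm q3 3 μ
        ≤ _ + eLpNorm (fun s => u₁ s * u₁ s) 3 μ := h1
      _ ≤ (eLpNorm (fun s => v₁ s * v₁ s) 3 μ + eLpNorm (fun s => v₁ s * u₁ s) 3 μ)
            + eLpNorm (fun s => u₁ s * u₁ s) 3 μ := add_le_add_left h2 _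
      _ ≤ B * B + B * A + A * A := add_le_add (add_le_add step4a step4b) step4c
  have step2 : eLpNorm g 2 μ ≤ C * (B * B + B * A + A * A) := by
    rw [hgeq]
    calc eLpNorm (fun s => (v₁ s - u₁ s) * q3 s) 2 μ
        ≤ eLpNorm (fun s => v₁ s - u₁ s) 6 μ * eLpNorm q3 3 μ :=
          wave_aux_holder_mul hsub1.1 hq3.1 wave_aux_e2
      _ = C * eLpNorm q3 3 μ := by rw [hCsub]
      _ ≤ C * (B * B + B * A + A * A) := mul_le_mul_right step3 C
  have key : eLpNorm (fun s => f s * g s) 1 μ ≤ E * (C * (B * B + B * A + A * A)) := by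
    calc eLpNorm (fun s => f s * g s) 1 μ
        ≤ eLpNorm f 2 μ * eLpNorm g 2 μ := wave_aux_holder_mul hf2.1 hg2.1 wave_aux_e1
      _ = E * eLpNorm g 2 μ := by rw [hfE]
      _ ≤ E * (C * (B * B + B * A + A * A)) := mul_le_mul_right step2 E
  -- finiteness
  have hAne : A ≠ ∞ := hu₁.2.ne
  have hBne : B ≠ ∞ := hv₁.2.ne
  have hCne : C ≠ ∞ := (hu₁.sub hv₁).2.ne
  have hEne : E ≠ ∞ := (hu₂.sub hv₂).2.ne
  have hsumne : B * B + B * A + A * A ≠ ∞ := by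
    simp [ENNReal.add_ne_top, ENNReal.mul_ne_top, hAne, hBne]
  have hRHSne : E * (C * (B * B + B * A + A * A)) ≠ ∞ :=
    ENNReal.mul_ne_top hEne (ENNReal.mul_ne_top hCne hsumne)
  -- pass to real numbers
  have hInt : ∫ s in D, (u₂ s - v₂ s) * ((v₁ s) ^ 3 - (u₁ s) ^ 3)
      ≤ (eLpNorm (fun s => f s * g s) 1 μ).toReal := wave_aux_int_le hfg
  have hInt2 : (eLpNorm (fun s => f s * g s) 1 μ).toReal
      ≤ (E * (C * (B * B + B * A + A * A))).toReal := ENNReal.toReal_mono hRHSne key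
  have hexpand : (E * (C * (B * B + B * A + A * A))).toReal
      = E.toReal * (C.toReal * (B.toReal * B.toReal + B.toReal * A.toReal
          + A.toReal * A.toReal)) := by
    rw [ENNReal.toReal_mul, ENNReal.toReal_mul, ENNReal.toReal_add, ENNReal.toReal_add,
      ENNReal.toReal_mul, ENNReal.toReal_mul, ENNReal.toReal_mul]
    · exact ENNReal.mul_ne_top hBne hBne
    · exact ENNReal.mul_ne_top hBne hAne
    · simp [ENNReal.add_ne_top, ENNReal.mul_ne_top, hAne, hBne]
    · exact ENNReal.mul_ne_top hAne hAne
  have ha : 0 ≤ A.toReal := ENNReal.toReal_nonneg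
  have hb : 0 ≤ B.toReal := ENNReal.toReal_nonneg
  have hc : 0 ≤ C.toReal := ENNReal.toReal_nonneg
  have he : 0 ≤ E.toReal := ENNReal.toReal_nonneg
  calc ∫ s in D, (u₂ s - v₂ s) * ((v₁ s) ^ 3 - (u₁ s) ^ 3)
      ≤ (E * (C * (B * B + B * A + A * A))).toReal := le_trans hInt hInt2
    _ = E.toReal * (C.toReal * (B.toReal * B.toReal + B.toReal * A.toReal
          + A.toReal * A.toReal)) := hexpand
    _ ≤ 6 * (A.toReal ^ 2 + B.toReal ^ 2) * (C.toReal ^ 2 + E.toReal ^ 2) := by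
        nlinarith [sq_nonneg (A.toReal - B.toReal), sq_nonneg (A.toReal + B.toReal),
          sq_nonneg (C.toReal - E.toReal), sq_nonneg (C.toReal + E.toReal),
          mul_nonneg ha hb, mul_nonneg hc he,
          mul_nonneg (mul_nonneg ha hb) (sq_nonneg (C.toReal - E.toReal)),
          mul_nonneg (mul_nonneg ha hb) (sq_nonneg (C.toReal + E.toReal)),
          mul_nonneg (add_nonneg (sq_nonneg A.toReal) (sq_nonneg B.toReal))
            (sq_nonneg (C.toReal - E.toReal))]
end

section
/- Let β ∈ (0,∞), ρ₀, ρ₁ ∈ [β/4, ∞), s ∈ ℝ, and define f : (0, π/2) → ℝ by f(x) = (ρ₀ − β/4)·(1/tan(x)) − (ρ₁ − β/4)·tan(x) + (s/2)·sin(2x). Then for all x, y ∈ (0, π/2) with x ≠ y it holds that (f(x) − f(y)) / (x − y) ≤ |s|. -/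
open Real in
lemma wf_aux (β ρ₀ ρ₁ s : ℝ) (hρ₀ : β / 4 ≤ ρ₀) (hρ₁ : β / 4 ≤ ρ₁)
    (x y : ℝ) (hx : x ∈ Set.Ioo 0 (Real.pi / 2)) (hy : y ∈ Set.Ioo 0 (Real.pi / 2))
    (h : y < x) :
    (((ρ₀ - β / 4) * (1 / Real.tan x) - (ρ₁ - β / 4) * Real.tan x
        + s / 2 * Real.sin (2 * x))
      - ((ρ₀ - β / 4) * (1 / Real.tan y) - (ρ₁ - β / 4) * Real.tan y
        + s / 2 * Real.sin (2 * y))) ≤ |s| * (x - y) := by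
  obtain ⟨hx1, hx2⟩ := hx
  obtain ⟨hy1, hy2⟩ := hy
  have hpi := Real.pi_pos
  have hty : Real.tan y < Real.tan x :=
    Real.tan_lt_tan_of_lt_of_lt_pi_div_two (by linarith) hx2 h
  have htyp : 0 < Real.tan y := Real.tan_pos_of_pos_of_lt_pi_div_two hy1 hy2
  have hcot : 1 / Real.tan x ≤ 1 / Real.tan y :=
    one_div_le_one_div_of_le htyp hty.le
  have t1 : (ρ₀ - β / 4) * (1 / Real.tan x) - (ρ₀ - β / 4) * (1 / Real.tan y) ≤ 0 := by
    nlinarith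
  have t2 : -((ρ₁ - β / 4) * Real.tan x) + (ρ₁ - β / 4) * Real.tan y ≤ 0 := by
    nlinarith
  have hsin : |Real.sin (2 * x) - Real.sin (2 * y)| ≤ 2 * (x - y) := by
    rw [Real.sin_sub_sin, abs_mul, abs_mul, abs_two]
    have h1 : |Real.sin ((2 * x - 2 * y) / 2)| ≤ x - y := by
      rw [show (2 * x - 2 * y) / 2 = x - y by ring]
      calc |Real.sin (x - y)| ≤ |x - y| := Real.abs_sin_le_abs
        _ = x - y := abs_of_pos (by linarith)
    have h2 : |Real.cos ((2 * x + 2 * y) / 2)| ≤ 1 := Real.abs_cos_le_one _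
    nlinarith [abs_nonneg (Real.sin ((2 * x - 2 * y) / 2))]
  have t3 : s / 2 * Real.sin (2 * x) - s / 2 * Real.sin (2 * y) ≤ |s| * (x - y) := by
    calc s / 2 * Real.sin (2 * x) - s / 2 * Real.sin (2 * y)
        = s / 2 * (Real.sin (2 * x) - Real.sin (2 * y)) := by ring
      _ ≤ |s / 2 * (Real.sin (2 * x) - Real.sin (2 * y))| := le_abs_self _
      _ = |s| / 2 * |Real.sin (2 * x) - Real.sin (2 * y)| := by
          rw [abs_mul, abs_div, abs_two]
      _ ≤ |s| / 2 * (2 * (x - y)) := by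
          gcongr
      _ = |s| * (x - y) := by ring
  linarith

/-- The drift of the arcsine-square-root transform of the Wright-Fisher diffusion
satisfies a global one-sided Lipschitz condition with constant `|s|`. -/
theorem wrightFisher_transformed_drift_one_sided_lipschitz
    (β ρ₀ ρ₁ s : ℝ) (hβ : 0 < β) (hρ₀ : β / 4 ≤ ρ₀) (hρ₁ : β / 4 ≤ ρ₁)
    (x y : ℝ) (hx : x ∈ Set.Ioo 0 (Real.pi / 2)) (hy : y ∈ Set.Ioo 0 (Real.pi / 2))
    (hxy : x ≠ y) :
    (((ρ₀ - β / 4) * (1 / Real.tan x) - (ρ₁ - β / 4) * Real.tan x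
        + s / 2 * Real.sin (2 * x))
      - ((ρ₀ - β / 4) * (1 / Real.tan y) - (ρ₁ - β / 4) * Real.tan y
        + s / 2 * Real.sin (2 * y))) / (x - y) ≤ |s| := by
  rcases hxy.lt_or_gt with h | h
  · rw [show ∀ a b : ℝ, (a - b) / (x - y) = (b - a) / (y - x) by
      intro a b; rw [← neg_sub a b, ← neg_sub x y, neg_div_neg_eq]]
    rw [div_le_iff₀ (by linarith)]
    exact wf_aux β ρ₀ ρ₁ s hρ₀ hρ₁ y x hy hx h
  · rw [div_le_iff₀ (by linarith)]
    exact wf_aux β ρ₀ ρ₁ s hρ₀ hρ₁ x y hx hy h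
end
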